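/- Let M be Hermitian positive definite and K Hermitian positive semidefinite, both n×n complex, 𝓜 > 0, and H_T = 𝓜K - iM. Then every eigenvalue λ of H_T⁻¹M satisfies |λ| ≤ 1. (Indeed, if H_T x = (1/λ) M x then 𝓜 x*Kx - i x*Mx = (1/λ) x*Mx, so |1/λ| ≥ 1.) -/

import Mathlib

open Matrix
open scoped ComplexOrder

lemma aux_quad {n : ℕ} (K M : Matrix (Fin n) (Fin n) ℂ)
    (hK : K.PosSemidef) (hM : M.PosDef) (𝓜 : ℝ) (h𝓜 : 0 < 𝓜)
    (x : Fin n → ℂ) (hx : x ≠ 0) :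
    star x ⬝ᵥ (((𝓜 : ℂ) • K - Complex.I • M)).mulVec x ≠ 0 := by
  have ha : 0 ≤ star x ⬝ᵥ K.mulVec x := hK.dotProduct_mulVec_nonneg x
  have hb : 0 < star x ⬝ᵥ M.mulVec x := hM.dotProduct_mulVec_pos hx
  set a := star x ⬝ᵥ K.mulVec x
  set b := star x ⬝ᵥ M.mulVec x
  have haim : a.im = 0 := by
    rw [Complex.nonneg_iff] at ha; exact ha.2.symm
  have hbre : 0 < b.re := by
    rw [Complex.pos_iff] at hb; exact hb.1
  intro h
  have : star x ⬝ᵥ (((𝓜 : ℂ) • K - Complex.I • M)).mulVec x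
      = (𝓜 : ℂ) * a - Complex.I * b := by
    simp [sub_mulVec, smul_mulVec, dotProduct_sub, smul_eq_mul,
      dotProduct_smul, a, b]
  rw [this] at h
  have him := congrArg Complex.im h
  simp [haim] at him
  exact absurd him (ne_of_gt hbre)

theorem stmt16 {n : ℕ} (K M : Matrix (Fin n) (Fin n) ℂ)
    (hK : K.PosSemidef) (hM : M.PosDef) (𝓜 : ℝ) (h𝓜 : 0 < 𝓜)
    (lam : ℂ)
    (hlam : ∃ x : Fin n → ℂ, x ≠ 0 ∧
      (((𝓜 : ℂ) • K - Complex.I • M)⁻¹ * M).mulVec x = lam • x) :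
    ‖lam‖ ≤ 1 := by
  obtain ⟨x, hx, hxe⟩ := hlam
  set A := ((𝓜 : ℂ) • K - Complex.I • M) with hA
  -- A is invertible
  have hdet : A.det ≠ 0 := by
    intro h
    obtain ⟨v, hv, hav⟩ := (Matrix.exists_mulVec_eq_zero_iff).2 h
    apply aux_quad K M hK hM 𝓜 h𝓜 v hv
    rw [hav, dotProduct_zero]
  have hu : IsUnit A.det := isUnit_iff_ne_zero.2 hdet
  -- M x = lam • A x
  have hMx : M.mulVec x = lam • A.mulVec x := by
    have := congrArg A.mulVec hxe
    rw [Matrix.mulVec_mulVec, ← Matrix.mul_assoc, Matrix.mul_nonsing_inv A hu, Matrix.one_mul] at this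
    simpa [Matrix.mulVec_smul] using this
  -- inner products
  have ha : 0 ≤ star x ⬝ᵥ K.mulVec x := hK.dotProduct_mulVec_nonneg x
  have hb : 0 < star x ⬝ᵥ M.mulVec x := hM.dotProduct_mulVec_pos hx
  set a := star x ⬝ᵥ K.mulVec x with hadef
  set b := star x ⬝ᵥ M.mulVec x with hbdef
  have haim : a.im = 0 := by rw [Complex.nonneg_iff] at ha; exact ha.2.symm
  have hare : 0 ≤ a.re := by rw [Complex.nonneg_iff] at ha; exact ha.1
  have hbim : b.im = 0 := by rw [Complex.pos_iff] at hb; exact hb.2.symm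
  have hbre : 0 < b.re := by rw [Complex.pos_iff] at hb; exact hb.1
  have key : b = lam * ((𝓜 : ℂ) * a - Complex.I * b) := by
    have := congrArg (fun v => star x ⬝ᵥ v) hMx
    simpa [hA, sub_mulVec, smul_mulVec, dotProduct_sub, dotProduct_smul,
      smul_eq_mul, mul_sub, hadef, hbdef] using this
  set d := (𝓜 : ℂ) * a - Complex.I * b with hddef
  have hdre : d.re = 𝓜 * a.re := by simp [hddef, haim, hbim]
  have hdim : d.im = -b.re := by simp [hddef, haim, hbim]
  have habsb : ‖b‖ = b.re := by
    rw [Complex.norm_def, Complex.normSq_apply, hbim]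
    rw [mul_zero, add_zero]; exact Real.sqrt_mul_self hbre.le
  have habsd : b.re ≤ ‖d‖ := by
    rw [Complex.norm_def, Complex.normSq_apply, hdim]
    calc b.re = Real.sqrt (b.re ^ 2) := (Real.sqrt_sq hbre.le).symm
      _ ≤ _ := by
        apply Real.sqrt_le_sqrt
        nlinarith [sq_nonneg (d.re)]
  have hdpos : 0 < ‖d‖ := lt_of_lt_of_le hbre habsd
  have : ‖lam‖ * ‖d‖ = b.re := by
    rw [← norm_mul, ← key, habsb]
  nlinarith [norm_nonneg lam]
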